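/- The clobber position oxoxox (alternating path of length 6) is equivalent to the zero game, i.e. it is a second-player win. -/

import Mathlib

universe u

namespace SetTheory

/-- Pre-games (removed from Mathlib; restored here with the old Mathlib meaning). -/
inductive PGame : Type (u + 1)
  | mk : ∀ α β : Type u, (α → PGame) → (β → PGame) → PGame

namespace PGame

/-- The pre-game with lists of left and right options, as in the old Mathlib. -/
def ofLists (L R : List PGame.{u}) : PGame.{u} :=
  mk (ULift (Fin L.length)) (ULift (Fin R.length)) (fun i => L.get i.down) fun j => R.get j.down

instance : Zero PGame := ⟨⟨PEmpty, PEmpty, PEmpty.elim, PEmpty.elim⟩⟩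

/-- Simultaneous definition of `x ≤ y` (first component) and `x ⧏ y` (second component). -/
noncomputable def leLF : PGame.{u} → PGame.{u} → Prop × Prop
  | mk _ _ xL xR, y =>
    @PGame.rec (fun _ => Prop × Prop)
      (fun yl yr yL yR ihL ihR =>
        ((∀ i, (leLF (xL i) (mk yl yr yL yR)).2) ∧ ∀ j, (ihR j).2,
          (∃ i, (ihL i).1) ∨ ∃ j, (leLF (xR j) (mk yl yr yL yR)).1)) y

instance : LE PGame := ⟨fun x y => (leLF x y).1⟩

/-- Equivalence of pre-games: `x ≤ y ∧ y ≤ x`. -/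
def Equiv (x y : PGame) : Prop := x ≤ y ∧ y ≤ x

instance : HasEquiv PGame := ⟨Equiv⟩

end PGame

end SetTheory

open SetTheory PGame

inductive Cell | x | o | e
deriving DecidableEq

abbrev Pos := List Cell

/-- All positions reachable by one move of the player with stones `me`
clobbering an adjacent stone of the opponent `opp`. -/
def movesAux (me opp : Cell) : Pos → List Pos
  | a :: b :: rest =>
      (if a = me ∧ b = opp then [Cell.e :: me :: rest] else []) ++
      (if a = opp ∧ b = me then [me :: Cell.e :: rest] else []) ++
      (movesAux me opp (b :: rest)).map (a :: ·)
  | _ => []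

def leftMoves (p : Pos) : List Pos := movesAux Cell.x Cell.o p
def rightMoves (p : Pos) : List Pos := movesAux Cell.o Cell.x p

def stones (p : Pos) : Nat := p.countP (· != Cell.e)

/-- Game value of a clobber position, via fuel recursion (each move removes one stone). -/
def valueFuel : Nat → Pos → PGame
  | 0, _ => 0
  | n+1, p => PGame.ofLists ((leftMoves p).map (valueFuel n)) ((rightMoves p).map (valueFuel n))

def value (p : Pos) : PGame := valueFuel (stones p) p

theorem zero_def : (0 : PGame.{u}) = PGame.mk PEmpty PEmpty PEmpty.elim PEmpty.elim := rfl

theorem leLF_mk_mk {xl xr : Type u} (xL : xl → PGame.{u}) (xR : xr → PGame.{u})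
    {yl yr : Type u} (yL : yl → PGame.{u}) (yR : yr → PGame.{u}) :
    leLF (PGame.mk xl xr xL xR) (PGame.mk yl yr yL yR) =
      ((∀ i, (leLF (xL i) (PGame.mk yl yr yL yR)).2) ∧ ∀ j, (leLF (PGame.mk xl xr xL xR) (yR j)).2,
        (∃ i, (leLF (PGame.mk xl xr xL xR) (yL i)).1) ∨ ∃ j, (leLF (xR j) (PGame.mk yl yr yL yR)).1) :=
  rfl

mutual
def zle : Nat → Pos → Bool
  | 0, _ => true
  | n+1, p => (rightMoves p).all (zlf n)
def zlf : Nat → Pos → Bool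
  | 0, _ => false
  | n+1, p => (leftMoves p).any (zle n)
end

mutual
def lez : Nat → Pos → Bool
  | 0, _ => true
  | n+1, p => (leftMoves p).all (lfz n)
def lfz : Nat → Pos → Bool
  | 0, _ => false
  | n+1, p => (rightMoves p).any (lez n)
end

mutual
theorem zle_sound : ∀ n p, zle n p = true → 0 ≤ valueFuel n p
  | 0, p, _ => by
    show (leLF 0 0).1
    rw [zero_def, leLF_mk_mk]
    exact ⟨fun i => i.elim, fun j => j.elim⟩
  | n+1, p, h => by
    show (leLF 0 (valueFuel (n+1) p)).1
    rw [valueFuel, ofLists, zero_def, leLF_mk_mk]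
    refine ⟨fun i => i.elim, fun j => ?_⟩
    rw [← zero_def]
    simp only [List.get_eq_getElem, List.getElem_map]
    exact zlf_sound n _ (by
      simp only [zle, List.all_eq_true] at h
      exact h _ (List.getElem_mem _))
theorem zlf_sound : ∀ n p, zlf n p = true → (leLF 0 (valueFuel n p)).2
  | n+1, p, h => by
    simp only [zlf, List.any_eq_true] at h
    obtain ⟨q, hq, hz⟩ := h
    obtain ⟨k, hk, rfl⟩ := List.mem_iff_getElem.mp hq
    rw [valueFuel, ofLists, zero_def, leLF_mk_mk]
    refine Or.inl ⟨ULift.up ⟨k, by simpa using hk⟩, ?_⟩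
    rw [← zero_def]
    show (0 : PGame) ≤ _
    simpa only [List.get_eq_getElem, List.getElem_map] using zle_sound n _ hz
end

mutual
theorem lez_sound : ∀ n p, lez n p = true → valueFuel n p ≤ 0
  | 0, p, _ => by
    show (leLF 0 0).1
    rw [zero_def, leLF_mk_mk]
    exact ⟨fun i => i.elim, fun j => j.elim⟩
  | n+1, p, h => by
    show (leLF (valueFuel (n+1) p) 0).1
    rw [valueFuel, ofLists, zero_def, leLF_mk_mk]
    refine ⟨fun i => ?_, fun j => j.elim⟩
    rw [← zero_def]
    simp only [List.get_eq_getElem, List.getElem_map]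
    exact lfz_sound n _ (by
      simp only [lez, List.all_eq_true] at h
      exact h _ (List.getElem_mem _))
theorem lfz_sound : ∀ n p, lfz n p = true → (leLF (valueFuel n p) 0).2
  | n+1, p, h => by
    simp only [lfz, List.any_eq_true] at h
    obtain ⟨q, hq, hz⟩ := h
    obtain ⟨k, hk, rfl⟩ := List.mem_iff_getElem.mp hq
    rw [valueFuel, ofLists, zero_def, leLF_mk_mk]
    refine Or.inr ⟨ULift.up ⟨k, by simpa using hk⟩, ?_⟩
    rw [← zero_def]
    show _ ≤ (0 : PGame)
    simpa only [List.get_eq_getElem, List.getElem_map] using lez_sound n _ hz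
end

/-- The clobber position `oxoxox` is a second-player win, i.e. equivalent to `0`. -/
theorem oxoxox_equiv_zero :
    value [Cell.o, Cell.x, Cell.o, Cell.x, Cell.o, Cell.x] ≈ (0 : PGame) := by
  have hs : stones [Cell.o, Cell.x, Cell.o, Cell.x, Cell.o, Cell.x] = 6 := by decide
  unfold value
  rw [hs]
  exact ⟨lez_sound 6 _ (by decide), zle_sound 6 _ (by decide)⟩
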